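/- Let $a : \mathbb{R}^d \to \mathbb{M}^d$ be a matrix-valued function, $n_0 \in \mathbb{R}^d$ a unit vector, and suppose $\langle a(x) n_0, n_0 \rangle \geq c > 0$ and $\|a(x)\| \leq M$ for all $x$ in a set $N$. Let $\theta \in [0, \pi/2]$ and let $Z \in \mathbb{R}^d$ with $\|Z\| = 1$ satisfy $\langle Z, n_0 \rangle \geq \cos\theta$. If $a(x)$ is symmetric positive semidefinite for each $x \in N$, then for all $x \in N$: $\langle a(x) Z, Z \rangle \geq \cos^2(\theta) \cdot c - 2(d-1)\sin(\theta) M$. In particular, if $\theta$ is small enough that $2(d-1)\sin(\theta) M \leq \frac{3}{4}\cos^2(\theta) c$, then $\langle a(x) Z, Z \rangle \geq \frac{c \cos^2\theta}{4}$ for all $x \in N$. -/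

import Mathlib

open scoped RealInnerProductSpace

/-- If `⟨a(x) n₀, n₀⟩ ≥ c`, `a(x)` has (operator) norm at most `M`, is symmetric positive
semidefinite on `N`, and `Z` is a unit vector with `⟨Z, n₀⟩ ≥ cos θ`, then
`⟨a(x) Z, Z⟩ ≥ cos²θ · c - 2(d-1) sin θ · M` on `N`; in particular if
`2(d-1) sin θ M ≤ (3/4) cos²θ c` then `⟨a(x) Z, Z⟩ ≥ c cos²θ / 4`. -/
theorem stmt1 (d : ℕ) (c M θ : ℝ) (hc : 0 < c) (hM : 0 ≤ M)
    (hθ : θ ∈ Set.Icc 0 (Real.pi / 2))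
    (N : Set (EuclideanSpace ℝ (Fin d)))
    (a : EuclideanSpace ℝ (Fin d) →
      (EuclideanSpace ℝ (Fin d) →L[ℝ] EuclideanSpace ℝ (Fin d)))
    (n0 : EuclideanSpace ℝ (Fin d)) (hn0 : ‖n0‖ = 1)
    (hlow : ∀ x ∈ N, c ≤ ⟪a x n0, n0⟫)
    (hbound : ∀ x ∈ N, ∀ v w : EuclideanSpace ℝ (Fin d), |⟪a x v, w⟫| ≤ M * ‖v‖ * ‖w‖)
    (hsymm : ∀ x ∈ N, ∀ v w : EuclideanSpace ℝ (Fin d), ⟪a x v, w⟫ = ⟪v, a x w⟫)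
    (hpsd : ∀ x ∈ N, ∀ v : EuclideanSpace ℝ (Fin d), 0 ≤ ⟪a x v, v⟫)
    (Z : EuclideanSpace ℝ (Fin d)) (hZ : ‖Z‖ = 1) (hZn : Real.cos θ ≤ ⟪Z, n0⟫) :
    (∀ x ∈ N, Real.cos θ ^ 2 * c - 2 * ((d : ℝ) - 1) * Real.sin θ * M ≤ ⟪a x Z, Z⟫) ∧
    (2 * ((d : ℝ) - 1) * Real.sin θ * M ≤ 3 / 4 * (Real.cos θ ^ 2 * c) →
      ∀ x ∈ N, c * Real.cos θ ^ 2 / 4 ≤ ⟪a x Z, Z⟫) := by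
  obtain ⟨hθ0, hθ2⟩ := hθ
  have hcos0 : 0 ≤ Real.cos θ := Real.cos_nonneg_of_mem_Icc ⟨by linarith [Real.pi_pos], hθ2⟩
  have hsin0 : 0 ≤ Real.sin θ := Real.sin_nonneg_of_nonneg_of_le_pi hθ0 (by linarith [Real.pi_pos])
  set β : ℝ := ⟪Z, n0⟫ with hβdef
  have hβ1 : β ≤ 1 := by
    have := real_inner_le_norm Z n0
    simpa [hZ, hn0] using this
  have hβc : Real.cos θ ≤ β := hZn
  set W : EuclideanSpace ℝ (Fin d) := Z - β • n0 with hWdef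
  have hn0n0 : ⟪n0, n0⟫ = 1 := by
    rw [real_inner_self_eq_norm_sq, hn0]; norm_num
  have hWn0 : ⟪W, n0⟫ = 0 := by
    rw [hWdef, inner_sub_left, real_inner_smul_left, hn0n0, ← hβdef]; ring
  have hWnorm2 : ‖W‖ ^ 2 = 1 - β ^ 2 := by
    have hWW : ⟪W, W⟫ = ⟪Z, Z⟫ - 2 * β * ⟪Z, n0⟫ + β ^ 2 * ⟪n0, n0⟫ := by
      simp only [hWdef, inner_sub_left, inner_sub_right, real_inner_smul_left,
        real_inner_smul_right]
      rw [real_inner_comm n0 Z]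
      ring
    rw [real_inner_self_eq_norm_sq, real_inner_self_eq_norm_sq, hZ, hn0n0, ← hβdef] at hWW
    rw [hWW]; ring
  have hWle : ‖W‖ ≤ Real.sin θ := by
    have h1 : ‖W‖ ^ 2 ≤ Real.sin θ ^ 2 := by
      have := Real.sin_sq_add_cos_sq θ
      nlinarith
    by_contra h
    push_neg at h
    nlinarith [norm_nonneg W]
  have hZdecomp : Z = β • n0 + W := by
    rw [hWdef]; abel
  -- key estimate
  have key : ∀ x ∈ N, Real.cos θ ^ 2 * c - 2 * M * ‖W‖ ≤ ⟪a x Z, Z⟫ := by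
    intro x hx
    have hexp : ⟪a x Z, Z⟫ =
        β ^ 2 * ⟪a x n0, n0⟫ + β * ⟪a x n0, W⟫ + β * ⟪a x W, n0⟫ + ⟪a x W, W⟫ := by
      conv_lhs => rw [hZdecomp]
      rw [map_add, map_smul]
      simp only [inner_add_left, inner_add_right, real_inner_smul_left, real_inner_smul_right,
        ContinuousLinearMap.coe_smul', Pi.smul_apply]
      ring
    have hβ0 : 0 ≤ β := le_trans hcos0 hβc
    have h1 : Real.cos θ ^ 2 * c ≤ β ^ 2 * ⟪a x n0, n0⟫ := by
      have hl := hlow x hx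
      have hsq : Real.cos θ ^ 2 ≤ β ^ 2 := by nlinarith
      calc Real.cos θ ^ 2 * c ≤ β ^ 2 * c :=
            mul_le_mul_of_nonneg_right hsq hc.le
        _ ≤ β ^ 2 * ⟪a x n0, n0⟫ := mul_le_mul_of_nonneg_left hl (sq_nonneg β)
    have h2 : |⟪a x n0, W⟫| ≤ M * ‖W‖ := by
      simpa [hn0] using hbound x hx n0 W
    have h3 : |⟪a x W, n0⟫| ≤ M * ‖W‖ := by
      simpa [hn0] using hbound x hx W n0
    have h4 : 0 ≤ ⟪a x W, W⟫ := hpsd x hx W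
    have h2' : -(M * ‖W‖) ≤ β * ⟪a x n0, W⟫ := by
      have habs : |β * ⟪a x n0, W⟫| ≤ M * ‖W‖ := by
        rw [abs_mul, abs_of_nonneg hβ0]
        calc β * |⟪a x n0, W⟫| ≤ 1 * (M * ‖W‖) :=
          mul_le_mul hβ1 h2 (abs_nonneg _) zero_le_one
        _ = M * ‖W‖ := one_mul _
      linarith [neg_abs_le (β * ⟪a x n0, W⟫), habs]
    have h3' : -(M * ‖W‖) ≤ β * ⟪a x W, n0⟫ := by
      have habs : |β * ⟪a x W, n0⟫| ≤ M * ‖W‖ := by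
        rw [abs_mul, abs_of_nonneg hβ0]
        calc β * |⟪a x W, n0⟫| ≤ 1 * (M * ‖W‖) :=
          mul_le_mul hβ1 h3 (abs_nonneg _) zero_le_one
        _ = M * ‖W‖ := one_mul _
      linarith [neg_abs_le (β * ⟪a x W, n0⟫), habs]
    rw [hexp]
    linarith
  have hWd : 2 * M * ‖W‖ ≤ 2 * ((d : ℝ) - 1) * Real.sin θ * M := by
    clear key hZdecomp hβdef
    rcases d with _ | _ | n
    · exfalso
      have hZ0 : Z = 0 := PiLp.ext fun i => i.elim0
      rw [hZ0, norm_zero] at hZ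
      norm_num at hZ
    · have hn0ne : n0 ≠ 0 := by
        intro h; rw [h, norm_zero] at hn0; norm_num at hn0
      have h00 : n0 0 ≠ 0 := by
        intro h
        apply hn0ne
        refine PiLp.ext fun i => ?_
        have hi : i = 0 := Fin.eq_zero i
        simp [hi, h]
      have hin : ⟪W, n0⟫ = W 0 * n0 0 := by
        rw [PiLp.inner_apply]
        simp [RCLike.inner_apply]; ring
      rw [hWn0] at hin
      have hW00 : W 0 = 0 := by
        rcases mul_eq_zero.mp hin.symm with h | h
        · exact h
        · exact absurd h h00
      have hWW : ⟪W, W⟫ = W 0 * W 0 := by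
        rw [PiLp.inner_apply]
        simp [RCLike.inner_apply]; ring
      rw [real_inner_self_eq_norm_sq, hW00, mul_zero] at hWW
      have hW0 : ‖W‖ = 0 := by nlinarith [norm_nonneg W]
      rw [hW0]
      norm_num
    · have hd1 : (1 : ℝ) ≤ ((n + 1 + 1 : ℕ) : ℝ) - 1 := by
        push_cast; linarith [Nat.cast_nonneg (α := ℝ) n]
      have e1 : M * ‖W‖ ≤ M * Real.sin θ := mul_le_mul_of_nonneg_left hWle hM
      have e2 : 1 * (Real.sin θ * M) ≤ (((n + 1 + 1 : ℕ) : ℝ) - 1) * (Real.sin θ * M) :=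
        mul_le_mul_of_nonneg_right hd1 (mul_nonneg hsin0 hM)
      nlinarith
  have part1 : ∀ x ∈ N, Real.cos θ ^ 2 * c - 2 * ((d : ℝ) - 1) * Real.sin θ * M ≤ ⟪a x Z, Z⟫ := by
    intro x hx
    linarith [key x hx]
  refine ⟨part1, fun hsmall x hx => ?_⟩
  have := part1 x hx
  nlinarith [sq_nonneg (Real.cos θ)]
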